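/- Let b ∈ (0,1/2), α ∈ (0,3) and r ∈ (0,∞). Then φ_{r,α}(θ2) > 0 for every θ2 > 0, and if (κ, η, θ2), (κ*, η*, θ2*) ∈ ℝ × ℝ × (0,∞) satisfy e^{−κy − ηz} φ_{r,α}(θ2) = e^{−κ*y − η*z} φ_{r,α}(θ2*) for all y, z ∈ [b, 1−b], then κ = κ*, η = η* and θ2 = θ2*. -/

import Mathlib

open Set MeasureTheory Real

/-- The Bessel function of the first kind of order 0, via its power series. -/
noncomputable def J0 (x : ℝ) : ℝ :=
  ∑' k : ℕ, (-1 : ℝ) ^ k / ((Nat.factorial k : ℝ)) ^ 2 * (x / 2) ^ (2 * k)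

/-- `φ_{r,α}(θ2)` of the paper. -/
noncomputable def phiRA (r α θ2 : ℝ) : ℝ :=
  2 / (θ2 ^ (1 - α) * Real.pi) *
    ∫ x in Set.Ioi (0 : ℝ),
      (1 - Real.exp (-x ^ 2)) / x ^ (1 + 2 * α) *
        (J0 (Real.sqrt 2 * r * x / Real.sqrt θ2) - 2 * J0 (r * x / Real.sqrt θ2) + 1)

namespace S19

lemma wallis (k : ℕ) : ∫ θ in (0:ℝ)..(2*π), Real.cos θ ^ (2*k)
    = 2*π * ((Nat.factorial (2*k) : ℝ) / (4^k * ((Nat.factorial k : ℝ))^2)) := by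
  induction k with
  | zero => simp
  | succ n ih =>
    have h2 : 2*(n+1) = 2*n + 2 := by ring
    rw [h2, integral_cos_pow (2*n), ih]
    have e1 : Real.sin (2*π) = 0 := Real.sin_two_pi
    have e2 : Real.sin 0 = 0 := Real.sin_zero
    rw [e1, e2]
    have hf : (Nat.factorial (2*n+2) : ℝ) = (2*n+2) * (2*n+1) * Nat.factorial (2*n) := by
      have : 2*n+2 = (2*n+1) + 1 := by ring
      rw [this, Nat.factorial_succ]
      have : 2*n+1 = (2*n) + 1 := by ring
      rw [this, Nat.factorial_succ]
      push_cast; ring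
    have hg : ((Nat.factorial (n+1) : ℝ))^2 = (n+1)^2 * ((Nat.factorial n : ℝ))^2 := by
      rw [Nat.factorial_succ]; push_cast; ring
    rw [hf, hg]
    have hfacn : ((Nat.factorial n : ℝ)) ≠ 0 := by positivity
    have hfac2n : ((Nat.factorial (2*n) : ℝ)) ≠ 0 := by positivity
    have h4 : (4:ℝ)^(n+1) = 4 * 4^n := by ring
    rw [h4]
    field_simp
    push_cast; ring

end S19

namespace S19

lemma summable_aux (c : ℝ) : Summable (fun k : ℕ => |c| ^ (2*k) / (Nat.factorial (2*k) : ℝ)) := by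
  apply Summable.of_nonneg_of_le (fun k => by positivity)
    (fun k => ?_) (Real.summable_pow_div_factorial (c^2))
  have h1 : |c| ^ (2*k) = (c^2)^k := by
    rw [pow_mul, sq_abs]
  rw [h1]
  apply div_le_div_of_nonneg_left (by positivity) (by positivity)
  exact_mod_cast Nat.factorial_le (by omega)

lemma hasSum_J0 (x : ℝ) :
    HasSum (fun k : ℕ => (-1 : ℝ) ^ k / ((Nat.factorial k : ℝ)) ^ 2 * (x / 2) ^ (2 * k)) (J0 x) := by
  apply Summable.hasSum
  apply Summable.of_norm
  apply Summable.of_nonneg_of_le (fun k => by positivity) (fun k => ?_)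
    (Real.summable_pow_div_factorial ((x/2)^2))
  have h1 : ‖(-1 : ℝ) ^ k / ((Nat.factorial k : ℝ)) ^ 2 * (x / 2) ^ (2 * k)‖
      = (((x/2)^2)^k) / ((Nat.factorial k : ℝ))^2 := by
    simp only [norm_eq_abs, abs_mul, abs_div, abs_pow, Nat.abs_cast, pow_mul, sq_abs, abs_neg,
      abs_one, one_pow]
    rw [div_pow, sq_abs, abs_of_nonneg (by norm_num : (0:ℝ) ≤ 2)]
    ring
  rw [h1]
  apply div_le_div_of_nonneg_left (by positivity) (by positivity)
  have h2 : (Nat.factorial k : ℝ) ≥ 1 := by exact_mod_cast Nat.one_le_iff_ne_zero.mpr (Nat.factorial_ne_zero k)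
  nlinarith [Nat.factorial_pos k, (by exact_mod_cast Nat.factorial_pos k : (0:ℝ) < Nat.factorial k)]

lemma J0_rep (x : ℝ) : J0 x = (2*π)⁻¹ * ∫ θ in (0:ℝ)..(2*π), Real.cos (x * Real.cos θ) := by
  have hπ : (0:ℝ) < 2*π := by positivity
  set F : ℕ → ℝ → ℝ := fun k θ => (-1 : ℝ)^k * (x * Real.cos θ)^(2*k) / (Nat.factorial (2*k) : ℝ)
    with hF
  have hcont : ∀ k, Continuous (F k) := by
    intro k; fun_prop
  have hFint : ∀ k, Integrable (F k) (volume.restrict (Ioc (0:ℝ) (2*π))) := fun k =>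
    (hcont k).integrableOn_Ioc
  have key : ∑' k, (∫ θ in Ioc (0:ℝ) (2*π), F k θ) = ∫ θ in Ioc (0:ℝ) (2*π), ∑' k, F k θ := by
    apply MeasureTheory.integral_tsum_of_summable_integral_norm hFint
    apply Summable.of_nonneg_of_le (fun k => integral_nonneg fun θ => norm_nonneg _)
      (fun k => ?_) ((summable_aux x).mul_left (2*π))
    have hb : ∀ θ : ℝ, ‖F k θ‖ ≤ |x|^(2*k) / (Nat.factorial (2*k) : ℝ) := by
      intro θ
      rw [hF]
      simp only [norm_eq_abs, abs_div, abs_mul, abs_pow, abs_neg, abs_one, one_pow, one_mul,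
        Nat.abs_cast]
      gcongr
      calc |x| * |Real.cos θ| ≤ |x| * 1 :=
            mul_le_mul_of_nonneg_left (abs_cos_le_one θ) (abs_nonneg x)
        _ = |x| := mul_one _
    calc ∫ θ, ‖F k θ‖ ∂(volume.restrict (Ioc (0:ℝ) (2*π)))
        ≤ ∫ _θ, (|x|^(2*k) / (Nat.factorial (2*k) : ℝ)) ∂(volume.restrict (Ioc (0:ℝ) (2*π))) := by
          apply MeasureTheory.integral_mono (hFint k).norm _ hb
          exact integrableOn_const (by rw [Real.volume_Ioc]; exact ENNReal.ofReal_ne_top) enorm_ne_top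
      _ = 2*π * (|x|^(2*k) / (Nat.factorial (2*k) : ℝ)) := by
          rw [MeasureTheory.setIntegral_const, measureReal_def, Real.volume_Ioc, sub_zero, smul_eq_mul,
            ENNReal.toReal_ofReal (by positivity)]
  have hFk : ∀ k, (∫ θ in Ioc (0:ℝ) (2*π), F k θ)
      = 2*π * ((-1:ℝ)^k / ((Nat.factorial k : ℝ))^2 * (x/2)^(2*k)) := by
    intro k
    have hpt : (fun θ => F k θ) = fun θ =>
        ((-1:ℝ)^k * x^(2*k) / (Nat.factorial (2*k) : ℝ)) * (Real.cos θ)^(2*k) := by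
      funext θ; rw [hF]; simp only; rw [mul_pow]; ring
    rw [hpt, MeasureTheory.integral_const_mul, ← intervalIntegral.integral_of_le hπ.le, wallis k]
    have h4 : ((x:ℝ)/2)^(2*k) = x^(2*k) / 4^k := by
      rw [div_pow]; norm_num [pow_mul]
    have hfacn : ((Nat.factorial k : ℝ)) ≠ 0 := by positivity
    have hfac2n : ((Nat.factorial (2*k) : ℝ)) ≠ 0 := by positivity
    rw [h4]; field_simp
  have hsum : ∀ θ : ℝ, ∑' k, F k θ = Real.cos (x * Real.cos θ) := fun θ =>
    (Real.hasSum_cos (x * Real.cos θ)).tsum_eq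
  have lhs : ∑' k, (∫ θ in Ioc (0:ℝ) (2*π), F k θ) = 2*π * J0 x := by
    simp_rw [hFk]
    rw [tsum_mul_left, (hasSum_J0 x).tsum_eq]
  rw [lhs] at key
  simp_rw [hsum] at key
  rw [intervalIntegral.integral_of_le hπ.le, ← key]
  field_simp

end S19

namespace S19

lemma continuous_J0 : Continuous J0 := by
  have : J0 = fun x => (2*π)⁻¹ * ∫ θ in (0:ℝ)..(2*π), Real.cos (x * Real.cos θ) := by
    funext x; exact J0_rep x
  rw [this]
  apply Continuous.mul continuous_const
  apply intervalIntegral.continuous_parametric_intervalIntegral_of_continuous'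
  fun_prop

/-- second difference of J0 -/
noncomputable def gg (a : ℝ) : ℝ := J0 (Real.sqrt 2 * a) - 2 * J0 a + 1

lemma continuous_gg : Continuous gg := by
  unfold gg
  exact ((continuous_J0.comp (continuous_const.mul continuous_id)).sub
    (continuous_const.mul continuous_J0)).add continuous_const

lemma ggRep (a : ℝ) : gg a
    = (2*π)⁻¹ * ∫ θ in (0:ℝ)..(2*π), (1 - Real.cos (a * Real.cos θ)) * (1 - Real.cos (a * Real.sin θ)) := by
  have hπ : (0:ℝ) < 2*π := by positivity
  have hper : ∀ c : ℝ, Function.Periodic (fun θ : ℝ => Real.cos (c * Real.cos θ)) (2*π) :=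
    fun c => Real.cos_periodic.comp (fun y => Real.cos (c * y))
  -- generic shift identity
  have shift : ∀ (c d : ℝ), (∫ θ in (0:ℝ)..(2*π), Real.cos (c * Real.cos (θ - d)))
      = ∫ θ in (0:ℝ)..(2*π), Real.cos (c * Real.cos θ) := by
    intro c d
    rw [intervalIntegral.integral_comp_sub_right (fun θ => Real.cos (c * Real.cos θ)) d]
    have h0 : (0:ℝ) - d = -d := by ring
    have h1 : 2*π - d = -d + 2*π := by ring
    rw [h0, h1]
    have := (hper c).intervalIntegral_add_eq (-d) 0
    simpa using this
  -- I1 : sin version equals cos version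
  have I1 : (∫ θ in (0:ℝ)..(2*π), Real.cos (a * Real.sin θ))
      = ∫ θ in (0:ℝ)..(2*π), Real.cos (a * Real.cos θ) := by
    rw [← shift a (π/2)]
    congr 1; funext θ
    rw [Real.cos_sub_pi_div_two]
  -- I2 : sum-angle version equals √2 version
  have I2 : (∫ θ in (0:ℝ)..(2*π), Real.cos (a * Real.cos θ + a * Real.sin θ))
      = ∫ θ in (0:ℝ)..(2*π), Real.cos ((Real.sqrt 2 * a) * Real.cos θ) := by
    rw [← shift (Real.sqrt 2 * a) (π/4)]
    congr 1; funext θ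
    congr 1
    rw [Real.cos_sub, Real.cos_pi_div_four, Real.sin_pi_div_four]
    have h2 : Real.sqrt 2 * Real.sqrt 2 = 2 := Real.mul_self_sqrt (by norm_num)
    linear_combination (-(a * Real.cos θ + a * Real.sin θ)/2) * h2
  -- I3 : the sin*sin integral vanishes
  have I3 : (∫ θ in (0:ℝ)..(2*π), Real.sin (a * Real.cos θ) * Real.sin (a * Real.sin θ)) = 0 := by
    have h := intervalIntegral.integral_comp_sub_left (a := (0:ℝ)) (b := 2*π)
      (fun θ => Real.sin (a * Real.cos θ) * Real.sin (a * Real.sin θ)) (2*π)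
    have h2 : ∀ θ : ℝ, Real.sin (a * Real.cos (2*π - θ)) * Real.sin (a * Real.sin (2*π - θ))
        = -(Real.sin (a * Real.cos θ) * Real.sin (a * Real.sin θ)) := by
      intro θ
      rw [Real.cos_two_pi_sub, Real.sin_two_pi_sub, mul_neg, Real.sin_neg]
      ring
    simp only [h2] at h
    rw [intervalIntegral.integral_neg] at h
    have h3 : 2*π - 2*π = 0 := by ring
    have h4 : 2*π - 0 = 2*π := by ring
    rw [h3, h4] at h
    linarith [h]
  -- expand the product
  have expand : ∀ θ : ℝ, (1 - Real.cos (a * Real.cos θ)) * (1 - Real.cos (a * Real.sin θ))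
      = 1 - Real.cos (a * Real.cos θ) - Real.cos (a * Real.sin θ)
        + (Real.cos (a * Real.cos θ + a * Real.sin θ)
           + Real.sin (a * Real.cos θ) * Real.sin (a * Real.sin θ)) := by
    intro θ
    rw [Real.cos_add]
    ring
  have ci : ∀ c : ℝ, IntervalIntegrable (fun θ => Real.cos (c * Real.cos θ)) volume 0 (2*π) :=
    fun c => (by fun_prop : Continuous fun θ => Real.cos (c * Real.cos θ)).intervalIntegrable _ _
  have ci2 : IntervalIntegrable (fun θ => Real.cos (a * Real.sin θ)) volume 0 (2*π) :=
    (by fun_prop : Continuous fun θ => Real.cos (a * Real.sin θ)).intervalIntegrable _ _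
  have ci3 : IntervalIntegrable (fun θ => Real.cos (a * Real.cos θ + a * Real.sin θ)
      + Real.sin (a * Real.cos θ) * Real.sin (a * Real.sin θ)) volume 0 (2*π) :=
    (by fun_prop : Continuous fun θ => Real.cos (a * Real.cos θ + a * Real.sin θ)
      + Real.sin (a * Real.cos θ) * Real.sin (a * Real.sin θ)).intervalIntegrable _ _
  have ci4 : IntervalIntegrable (fun θ => Real.cos (a * Real.cos θ + a * Real.sin θ)) volume 0 (2*π) :=
    (by fun_prop : Continuous fun θ => Real.cos (a * Real.cos θ + a * Real.sin θ)).intervalIntegrable _ _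
  have ci5 : IntervalIntegrable (fun θ => Real.sin (a * Real.cos θ) * Real.sin (a * Real.sin θ)) volume 0 (2*π) :=
    (by fun_prop : Continuous fun θ => Real.sin (a * Real.cos θ) * Real.sin (a * Real.sin θ)).intervalIntegrable _ _
  have split : (∫ θ in (0:ℝ)..(2*π), (1 - Real.cos (a * Real.cos θ)) * (1 - Real.cos (a * Real.sin θ)))
      = (∫ _θ in (0:ℝ)..(2*π), (1:ℝ)) - (∫ θ in (0:ℝ)..(2*π), Real.cos (a * Real.cos θ))
        - (∫ θ in (0:ℝ)..(2*π), Real.cos (a * Real.sin θ))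
        + ((∫ θ in (0:ℝ)..(2*π), Real.cos (a * Real.cos θ + a * Real.sin θ))
           + (∫ θ in (0:ℝ)..(2*π), Real.sin (a * Real.cos θ) * Real.sin (a * Real.sin θ))) := by
    rw [← intervalIntegral.integral_add ci4 ci5]
    rw [← intervalIntegral.integral_sub (intervalIntegrable_const) (ci a)]
    rw [← intervalIntegral.integral_sub (intervalIntegrable_const.sub (ci a)) ci2]
    rw [← intervalIntegral.integral_add ((intervalIntegrable_const.sub (ci a)).sub ci2) ci3]
    congr 1; funext θ
    exact expand θ
  rw [split, I1, I2, I3]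
  rw [intervalIntegral.integral_const, smul_eq_mul, mul_one, sub_zero]
  have j1 := J0_rep a
  have j2 := J0_rep (Real.sqrt 2 * a)
  have hne : (2*π) ≠ 0 := ne_of_gt hπ
  unfold gg
  rw [j1, j2]
  field_simp
  ring

end S19

namespace S19

lemma gg_nonneg (a : ℝ) : 0 ≤ gg a := by
  rw [ggRep]
  apply mul_nonneg (by positivity)
  apply intervalIntegral.integral_nonneg (by positivity)
  intro θ _
  have h1 := Real.cos_le_one (a * Real.cos θ)
  have h2 := Real.cos_le_one (a * Real.sin θ)
  nlinarith

lemma gg_le_sq (a : ℝ) : gg a ≤ a^4 / 4 := by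
  have hπ : (0:ℝ) < 2*π := by positivity
  rw [ggRep]
  have hb : (∫ θ in (0:ℝ)..(2*π), (1 - Real.cos (a * Real.cos θ)) * (1 - Real.cos (a * Real.sin θ)))
      ≤ ∫ _θ in (0:ℝ)..(2*π), a^4/4 := by
    apply intervalIntegral.integral_mono_on (by positivity)
      ((by fun_prop : Continuous fun θ => (1 - Real.cos (a * Real.cos θ)) *
        (1 - Real.cos (a * Real.sin θ))).intervalIntegrable _ _) intervalIntegrable_const
    intro θ _
    have h1 := Real.one_sub_sq_div_two_le_cos (x := a * Real.cos θ)
    have h2 := Real.one_sub_sq_div_two_le_cos (x := a * Real.sin θ)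
    have n1 := Real.cos_le_one (a * Real.cos θ)
    have n2 := Real.cos_le_one (a * Real.sin θ)
    have c1 : Real.cos θ ^ 2 ≤ 1 := Real.cos_sq_le_one θ
    have s1 : Real.sin θ ^ 2 ≤ 1 := Real.sin_sq_le_one θ
    have c0 : (0:ℝ) ≤ Real.cos θ ^ 2 := sq_nonneg _
    have s0 : (0:ℝ) ≤ Real.sin θ ^ 2 := sq_nonneg _
    have key : (1 - Real.cos (a * Real.cos θ)) * (1 - Real.cos (a * Real.sin θ))
        ≤ ((a * Real.cos θ)^2/2) * ((a * Real.sin θ)^2/2) := by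
      apply mul_le_mul (by linarith) (by linarith) (by linarith) (by positivity)
    have e1 : ((a * Real.cos θ)^2/2) * ((a * Real.sin θ)^2/2) ≤ a^4/4 := by
      have : (a * Real.cos θ)^2 * (a * Real.sin θ)^2 = a^4 * (Real.cos θ^2 * Real.sin θ^2) := by
        ring
      nlinarith [sq_nonneg (a^2), mul_le_one₀ c1 s0 s1]
    linarith
  rw [intervalIntegral.integral_const, smul_eq_mul] at hb
  calc (2*π)⁻¹ * (∫ θ in (0:ℝ)..(2*π), (1 - Real.cos (a * Real.cos θ)) * (1 - Real.cos (a * Real.sin θ)))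
      ≤ (2*π)⁻¹ * ((2*π - 0) * (a^4/4)) := by
        apply mul_le_mul_of_nonneg_left hb (by positivity)
    _ = a^4/4 := by field_simp; ring
  
lemma gg_le_four (a : ℝ) : gg a ≤ 4 := by
  have hπ : (0:ℝ) < 2*π := by positivity
  rw [ggRep]
  have hb : (∫ θ in (0:ℝ)..(2*π), (1 - Real.cos (a * Real.cos θ)) * (1 - Real.cos (a * Real.sin θ)))
      ≤ ∫ _θ in (0:ℝ)..(2*π), (4:ℝ) := by
    apply intervalIntegral.integral_mono_on (by positivity)
      ((by fun_prop : Continuous fun θ => (1 - Real.cos (a * Real.cos θ)) *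
        (1 - Real.cos (a * Real.sin θ))).intervalIntegrable _ _) intervalIntegrable_const
    intro θ _
    have h1 := Real.neg_one_le_cos (a * Real.cos θ)
    have h2 := Real.neg_one_le_cos (a * Real.sin θ)
    have n1 := Real.cos_le_one (a * Real.cos θ)
    have n2 := Real.cos_le_one (a * Real.sin θ)
    nlinarith
  rw [intervalIntegral.integral_const, smul_eq_mul] at hb
  calc (2*π)⁻¹ * (∫ θ in (0:ℝ)..(2*π), (1 - Real.cos (a * Real.cos θ)) * (1 - Real.cos (a * Real.sin θ)))
      ≤ (2*π)⁻¹ * ((2*π - 0) * 4) := by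
        apply mul_le_mul_of_nonneg_left hb (by positivity)
    _ = 4 := by field_simp; ring

lemma gg_pos {a : ℝ} (h0 : 0 < a) (hπa : a ≤ π) : 0 < gg a := by
  have hπ : (0:ℝ) < 2*π := by positivity
  rw [ggRep]
  apply mul_pos (by positivity)
  have hc : Continuous fun θ => (1 - Real.cos (a * Real.cos θ)) * (1 - Real.cos (a * Real.sin θ)) := by
    fun_prop
  have hsplit : (∫ θ in (0:ℝ)..(2*π), (1 - Real.cos (a * Real.cos θ)) * (1 - Real.cos (a * Real.sin θ)))
      = (∫ θ in (0:ℝ)..(π/2), (1 - Real.cos (a * Real.cos θ)) * (1 - Real.cos (a * Real.sin θ)))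
      + ∫ θ in (π/2)..(2*π), (1 - Real.cos (a * Real.cos θ)) * (1 - Real.cos (a * Real.sin θ)) := by
    rw [intervalIntegral.integral_add_adjacent_intervals (hc.intervalIntegrable _ _)
      (hc.intervalIntegrable _ _)]
  rw [hsplit]
  have key : ∀ t : ℝ, 0 < t → t ≤ π → Real.cos t < 1 := by
    intro t ht1 ht2
    have := Real.cos_lt_cos_of_nonneg_of_le_pi (le_refl 0) ht2 ht1
    rwa [Real.cos_zero] at this
  have hpos : 0 < ∫ θ in (0:ℝ)..(π/2), (1 - Real.cos (a * Real.cos θ)) * (1 - Real.cos (a * Real.sin θ)) := by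
    apply intervalIntegral.intervalIntegral_pos_of_pos_on (hc.intervalIntegrable _ _) _ (by positivity)
    intro θ hθ
    obtain ⟨hθ1, hθ2⟩ := hθ
    have hcθ : 0 < Real.cos θ := Real.cos_pos_of_mem_Ioo ⟨by linarith [Real.pi_pos], hθ2⟩
    have hsθ : 0 < Real.sin θ := Real.sin_pos_of_pos_of_lt_pi hθ1 (by linarith [Real.pi_pos])
    have hc1 : Real.cos θ ≤ 1 := Real.cos_le_one θ
    have hs1 : Real.sin θ ≤ 1 := Real.sin_le_one θ
    have k1 : Real.cos (a * Real.cos θ) < 1 := key _ (by positivity) (by nlinarith)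
    have k2 : Real.cos (a * Real.sin θ) < 1 := key _ (by positivity) (by nlinarith)
    nlinarith
  have hnn : 0 ≤ ∫ θ in (π/2)..(2*π), (1 - Real.cos (a * Real.cos θ)) * (1 - Real.cos (a * Real.sin θ)) := by
    apply intervalIntegral.integral_nonneg (by nlinarith [Real.pi_pos])
    intro θ _
    have h1 := Real.cos_le_one (a * Real.cos θ)
    have h2 := Real.cos_le_one (a * Real.sin θ)
    nlinarith
  linarith

end S19

namespace S19

noncomputable def f (r α θ2 u : ℝ) : ℝ :=
  (1 - Real.exp (-(θ2 * u^2))) / u^((1:ℝ)+2*α) * gg (r*u)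

lemma continuousOn_f (r α θ2 : ℝ) : ContinuousOn (f r α θ2) (Ioi 0) := by
  apply ContinuousOn.mul
  · apply ContinuousOn.div
    · fun_prop
    · intro u hu
      exact (Real.continuousAt_rpow_const u _ (Or.inl (ne_of_gt hu))).continuousWithinAt
    · intro u hu
      exact (Real.rpow_pos_of_pos hu _).ne'
  · exact (continuous_gg.comp (continuous_const.mul continuous_id)).continuousOn

lemma f_nonneg (r α θ2 : ℝ) (hθ : 0 ≤ θ2) {u : ℝ} (hu : 0 < u) : 0 ≤ f r α θ2 u := by
  apply mul_nonneg (div_nonneg _ (Real.rpow_nonneg hu.le _)) (gg_nonneg _)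
  have : Real.exp (-(θ2 * u^2)) ≤ 1 := Real.exp_le_one_iff.mpr (by nlinarith)
  linarith

lemma f_pos (r α θ2 : ℝ) (hr : 0 < r) (hθ : 0 < θ2) {u : ℝ} (hu : 0 < u) (hu2 : r * u ≤ π) :
    0 < f r α θ2 u := by
  apply mul_pos (div_pos _ (Real.rpow_pos_of_pos hu _)) (gg_pos (by positivity) hu2)
  have : Real.exp (-(θ2 * u^2)) < 1 := by
    rw [Real.exp_lt_one_iff]
    nlinarith [pow_pos hu 2]
  linarith

lemma f_le_left (r α θ2 : ℝ) (hθ : 0 < θ2) {u : ℝ} (hu : 0 < u) :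
    f r α θ2 u ≤ (θ2 * r^4/4) * u ^ ((5:ℝ) - 2*α) := by
  have hB : (0:ℝ) < u^((1:ℝ)+2*α) := Real.rpow_pos_of_pos hu _
  have hA0 : 0 ≤ 1 - Real.exp (-(θ2 * u^2)) := by
    have : Real.exp (-(θ2 * u^2)) ≤ 1 := Real.exp_le_one_iff.mpr (by nlinarith)
    linarith
  have hA : 1 - Real.exp (-(θ2 * u^2)) ≤ θ2 * u^2 := by
    have := Real.add_one_le_exp (-(θ2 * u^2))
    linarith
  have step1 : f r α θ2 u ≤ (θ2 * u^2)/u^((1:ℝ)+2*α) * ((r*u)^4/4) := by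
    unfold f
    apply mul_le_mul (by gcongr) (gg_le_sq _) (gg_nonneg _) (by positivity)
  have step2 : (θ2 * u^2)/u^((1:ℝ)+2*α) * ((r*u)^4/4)
      = (θ2 * r^4/4) * (u^(6:ℕ) / u^((1:ℝ)+2*α)) := by ring
  have step3 : (u:ℝ)^(6:ℕ) / u^((1:ℝ)+2*α) = u ^ ((5:ℝ) - 2*α) := by
    have h6 : (u:ℝ)^(6:ℕ) = u^((6:ℝ)) := by
      rw [← Real.rpow_natCast u 6]; norm_num
    rw [h6, ← Real.rpow_sub hu]
    congr 1; ring
  calc f r α θ2 u ≤ (θ2 * u^2)/u^((1:ℝ)+2*α) * ((r*u)^4/4) := step1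
    _ = (θ2 * r^4/4) * u ^ ((5:ℝ) - 2*α) := by rw [step2, step3]

lemma f_le_right (r α θ2 : ℝ) (hθ : 0 < θ2) {u : ℝ} (hu : 0 < u) :
    f r α θ2 u ≤ 4 * u ^ (-((1:ℝ)+2*α)) := by
  have hB : (0:ℝ) < u^((1:ℝ)+2*α) := Real.rpow_pos_of_pos hu _
  have hA0 : 0 ≤ 1 - Real.exp (-(θ2 * u^2)) := by
    have : Real.exp (-(θ2 * u^2)) ≤ 1 := Real.exp_le_one_iff.mpr (by nlinarith)
    linarith
  have hA : 1 - Real.exp (-(θ2 * u^2)) ≤ 1 := by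
    linarith [Real.exp_pos (-(θ2 * u^2))]
  have step1 : f r α θ2 u ≤ 1/u^((1:ℝ)+2*α) * 4 := by
    unfold f
    apply mul_le_mul (by gcongr) (gg_le_four _) (gg_nonneg _) (by positivity)
  calc f r α θ2 u ≤ 1/u^((1:ℝ)+2*α) * 4 := step1
    _ = 4 * u ^ (-((1:ℝ)+2*α)) := by
      rw [Real.rpow_neg hu.le]; ring

lemma integrable_f (r α : ℝ) (hα : 0 < α) (hα3 : α < 3) {θ2 : ℝ} (hθ : 0 < θ2) :
    IntegrableOn (f r α θ2) (Ioi 0) := by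
  rw [show Ioi (0:ℝ) = Ioc 0 1 ∪ Ioi 1 from (Ioc_union_Ioi_eq_Ioi zero_le_one).symm]
  apply IntegrableOn.union
  · have hg : IntegrableOn (fun u : ℝ => (θ2 * r^4/4) * u ^ ((5:ℝ) - 2*α)) (Ioc 0 1) := by
      have h1 := (intervalIntegral.intervalIntegrable_rpow' (show (-1:ℝ) < 5 - 2*α by linarith) (a := (0:ℝ)) (b := 1)).1
      exact h1.const_mul _
    apply Integrable.mono' hg
    · exact ((continuousOn_f r α θ2).mono Ioc_subset_Ioi_self).aestronglyMeasurable measurableSet_Ioc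
    · rw [ae_restrict_iff' measurableSet_Ioc]
      apply ae_of_all
      intro u hu
      rw [Real.norm_eq_abs, abs_of_nonneg (f_nonneg r α θ2 hθ.le hu.1)]
      exact f_le_left r α θ2 hθ hu.1
  · have hg : IntegrableOn (fun u : ℝ => 4 * u ^ (-((1:ℝ)+2*α))) (Ioi 1) :=
      (integrableOn_Ioi_rpow_of_lt (by linarith) one_pos).const_mul 4
    apply Integrable.mono' hg
    · exact ((continuousOn_f r α θ2).mono (Ioi_subset_Ioi zero_le_one)).aestronglyMeasurable
        measurableSet_Ioi
    · rw [ae_restrict_iff' measurableSet_Ioi]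
      apply ae_of_all
      intro u hu
      have hu0 : (0:ℝ) < u := lt_trans one_pos hu
      rw [Real.norm_eq_abs, abs_of_nonneg (f_nonneg r α θ2 hθ.le hu0)]
      exact f_le_right r α θ2 hθ hu0

end S19


namespace S19

lemma phi_eq (r α : ℝ) {θ2 : ℝ} (hθ : 0 < θ2) :
    phiRA r α θ2 = 2/π * θ2⁻¹ * ∫ u in Ioi (0:ℝ), f r α θ2 u := by
  have hc0 : 0 < Real.sqrt θ2 := Real.sqrt_pos.mpr hθ
  set c := Real.sqrt θ2 with hc
  have hc2 : c^2 = θ2 := Real.sq_sqrt hθ.le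
  unfold phiRA
  have cov := MeasureTheory.integral_comp_mul_left_Ioi
    (fun x => (1 - Real.exp (-x ^ 2)) / x ^ ((1:ℝ) + 2 * α) *
      (J0 (Real.sqrt 2 * r * x / c) - 2 * J0 (r * x / c) + 1)) 0 hc0
  rw [mul_zero] at cov
  have cov' : (∫ x in Ioi (0:ℝ), (1 - Real.exp (-x ^ 2)) / x ^ ((1:ℝ) + 2 * α) *
      (J0 (Real.sqrt 2 * r * x / c) - 2 * J0 (r * x / c) + 1))
      = c * ∫ u in Ioi (0:ℝ), (1 - Real.exp (-(c*u) ^ 2)) / (c*u) ^ ((1:ℝ) + 2 * α) *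
      (J0 (Real.sqrt 2 * r * (c*u) / c) - 2 * J0 (r * (c*u) / c) + 1) := by
    rw [cov, smul_eq_mul, ← mul_assoc, mul_inv_cancel₀ hc0.ne', one_mul]
  rw [cov']
  have hpt : ∀ u ∈ Ioi (0:ℝ), (1 - Real.exp (-(c*u) ^ 2)) / (c*u) ^ ((1:ℝ) + 2 * α) *
      (J0 (Real.sqrt 2 * r * (c*u) / c) - 2 * J0 (r * (c*u) / c) + 1)
      = c ^ (-((1:ℝ)+2*α)) * f r α θ2 u := by
    intro u hu
    have hu0 : (0:ℝ) < u := hu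
    have e1 : ((c*u):ℝ)^2 = θ2 * u^2 := by rw [mul_pow, hc2]
    have e2 : ((c*u):ℝ) ^ ((1:ℝ) + 2*α) = c ^ ((1:ℝ)+2*α) * u ^ ((1:ℝ)+2*α) :=
      Real.mul_rpow hc0.le hu0.le
    have e3 : Real.sqrt 2 * r * (c*u) / c = Real.sqrt 2 * (r*u) := by
      field_simp
    have e4 : r * (c*u) / c = r*u := by field_simp
    rw [e1, e2, e3, e4]
    unfold f gg
    rw [Real.rpow_neg hc0.le]
    have hcp : (0:ℝ) < c ^ ((1:ℝ)+2*α) := Real.rpow_pos_of_pos hc0 _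
    have hup : (0:ℝ) < u ^ ((1:ℝ)+2*α) := Real.rpow_pos_of_pos hu0 _
    field_simp
  rw [setIntegral_congr_fun measurableSet_Ioi hpt, MeasureTheory.integral_const_mul]
  set I := ∫ u in Ioi (0:ℝ), f r α θ2 u
  have coef : 2 / (θ2 ^ ((1:ℝ) - α) * π) * (c * (c ^ (-((1:ℝ)+2*α)))) = 2/π * θ2⁻¹ := by
    have hθpow : θ2 ^ ((1:ℝ) - α) = c ^ (2*((1:ℝ) - α)) := by
      rw [← hc2, ← Real.rpow_natCast c 2, ← Real.rpow_mul hc0.le]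
      norm_num
    have hcc : c * c ^ (-((1:ℝ)+2*α)) = c ^ ((1:ℝ) + -((1:ℝ)+2*α)) := by
      rw [Real.rpow_add hc0, Real.rpow_one]
    have h2r : c ^ ((2:ℝ)) = θ2 := by
      rw [show ((2:ℝ)) = ((2:ℕ):ℝ) by norm_num, Real.rpow_natCast, hc2]
    have hinv : θ2⁻¹ = c ^ (-(2:ℝ)) := by rw [Real.rpow_neg hc0.le, h2r]
    have hsplit : c ^ ((1:ℝ) + -(1+2*α)) = c ^ (2*((1:ℝ)-α)) * c ^ (-(2:ℝ)) := by
      rw [← Real.rpow_add hc0]; congr 1; ring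
    rw [hθpow, hcc, hinv, hsplit]
    have hp1 : (c ^ (2*((1:ℝ) - α))) ≠ 0 := (Real.rpow_pos_of_pos hc0 _).ne'
    have hp2 : (c ^ (-(2:ℝ))) ≠ 0 := (Real.rpow_pos_of_pos hc0 _).ne'
    have hπ0 : (π:ℝ) ≠ 0 := Real.pi_ne_zero
    field_simp
  calc 2 / (θ2 ^ ((1:ℝ) - α) * π) * (c * (c ^ (-((1:ℝ)+2*α)) * I))
      = (2 / (θ2 ^ ((1:ℝ) - α) * π) * (c * (c ^ (-((1:ℝ)+2*α))))) * I := by ring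
    _ = 2/π * θ2⁻¹ * I := by rw [coef]

end S19

namespace S19

lemma integral_f_pos (r α : ℝ) (hr : 0 < r) (hα : 0 < α) (hα3 : α < 3) {θ2 : ℝ} (hθ : 0 < θ2) :
    0 < ∫ u in Ioi (0:ℝ), f r α θ2 u := by
  rw [setIntegral_pos_iff_support_of_nonneg_ae]
  · have hsub : Ioo 0 (π/r) ⊆ Function.support (f r α θ2) ∩ Ioi 0 := by
      intro u hu
      refine ⟨?_, hu.1⟩
      have hru : r * u ≤ π := by
        have := (lt_div_iff₀ hr).mp hu.2
        linarith [this]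
      exact (f_pos r α θ2 hr hθ hu.1 hru).ne'
    calc (0:ENNReal) < volume (Ioo (0:ℝ) (π/r)) := by
          rw [Real.volume_Ioo]
          exact ENNReal.ofReal_pos.mpr (by simpa using div_pos Real.pi_pos hr)
      _ ≤ volume (Function.support (f r α θ2) ∩ Ioi 0) := measure_mono hsub
  · show ∀ᵐ u ∂(volume.restrict (Ioi (0:ℝ))), 0 ≤ f r α θ2 u
    rw [ae_restrict_iff' measurableSet_Ioi]
    exact ae_of_all _ fun u hu => f_nonneg r α θ2 hθ.le hu
  · exact integrable_f r α hα hα3 hθ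

lemma phi_pos (r α : ℝ) (hr : 0 < r) (hα : 0 < α) (hα3 : α < 3) {θ2 : ℝ} (hθ : 0 < θ2) :
    0 < phiRA r α θ2 := by
  rw [phi_eq r α hθ]
  have h1 : (0:ℝ) < 2/π := by positivity
  exact mul_pos (mul_pos h1 (inv_pos.mpr hθ)) (integral_f_pos r α hr hα hα3 hθ)

lemma key_ineq {u s t : ℝ} (hu : 0 < u) (hs : 0 < s) (hst : s < t) :
    (1 - Real.exp (-(t*u^2)))/t < (1 - Real.exp (-(s*u^2)))/s := by
  have hc0 : (0:ℝ) < u^2 := by positivity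
  set F : ℝ → ℝ := fun x => (1 - Real.exp (-(x*u^2)))/x with hF
  have hanti : StrictAntiOn F (Ioi 0) := by
    apply strictAntiOn_of_deriv_neg (convex_Ioi 0)
    · apply ContinuousOn.div (by fun_prop) continuousOn_id
      intro x hx
      exact ne_of_gt hx
    · intro x hx
      rw [interior_Ioi] at hx
      have hx0 : (0:ℝ) < x := hx
      have h1 : HasDerivAt (fun y : ℝ => -(y*u^2)) (-(u^2)) x := by
        rw [show -(u^2) = -(1*u^2) by ring]; exact ((hasDerivAt_id' x).mul_const (u^2)).neg
      have h2 : HasDerivAt (fun y : ℝ => Real.exp (-(y*u^2))) (Real.exp (-(x*u^2)) * (-(u^2))) x :=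
        h1.exp
      have h3 : HasDerivAt (fun y : ℝ => 1 - Real.exp (-(y*u^2))) (u^2 * Real.exp (-(x*u^2))) x := by
        have := h2.const_sub 1
        rw [show u^2 * Real.exp (-(x*u^2)) = -(Real.exp (-(x*u^2)) * -(u^2)) by ring]
        exact this
      have h4 := h3.div (hasDerivAt_id x) (ne_of_gt hx0)
      have h5 : HasDerivAt F ((u^2 * Real.exp (-(x*u^2)) * x - (1 - Real.exp (-(x*u^2))) * 1) / x^2)
          x := by exact h4
      rw [h5.deriv]
      apply div_neg_of_neg_of_pos _ (pow_pos hx0 2)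
      have hxc : (0:ℝ) < x * u^2 := by positivity
      have hlt := Real.add_one_lt_exp (ne_of_gt hxc)
      have hep : (0:ℝ) < Real.exp (x*u^2) := Real.exp_pos _
      have he : Real.exp (-(x*u^2)) = (Real.exp (x*u^2))⁻¹ := Real.exp_neg _
      have hEE : Real.exp (x*u^2) * (Real.exp (x*u^2))⁻¹ = 1 := mul_inv_cancel₀ hep.ne'
      have hprod : 0 < (Real.exp (x*u^2) - (x*u^2 + 1)) * (Real.exp (x*u^2))⁻¹ :=
        mul_pos (by linarith) (inv_pos.mpr hep)
      rw [he]
      simp only [id_eq, mul_one]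
      nlinarith [hprod, hEE]
  exact hanti (mem_Ioi.mpr hs) (mem_Ioi.mpr (hs.trans hst)) hst

lemma diff_le (r α : ℝ) {s t u : ℝ} (hs : 0 < s) (hst : s < t) (hu : 0 < u) :
    t⁻¹ * f r α t u ≤ s⁻¹ * f r α s u := by
  have key := key_ineq hu hs hst
  have hCB : 0 ≤ gg (r*u) / u^((1:ℝ)+2*α) := div_nonneg (gg_nonneg _) (Real.rpow_nonneg hu.le _)
  have e1 : t⁻¹ * f r α t u = ((1 - Real.exp (-(t*u^2)))/t) * (gg (r*u) / u^((1:ℝ)+2*α)) := by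
    unfold f; ring
  have e2 : s⁻¹ * f r α s u = ((1 - Real.exp (-(s*u^2)))/s) * (gg (r*u) / u^((1:ℝ)+2*α)) := by
    unfold f; ring
  rw [e1, e2]
  exact mul_le_mul_of_nonneg_right key.le hCB

lemma diff_lt (r α : ℝ) (hr : 0 < r) {s t u : ℝ} (hs : 0 < s) (hst : s < t) (hu : 0 < u)
    (hru : r * u ≤ π) : t⁻¹ * f r α t u < s⁻¹ * f r α s u := by
  have key := key_ineq hu hs hst
  have hCB : 0 < gg (r*u) / u^((1:ℝ)+2*α) :=
    div_pos (gg_pos (by positivity) hru) (Real.rpow_pos_of_pos hu _)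
  have e1 : t⁻¹ * f r α t u = ((1 - Real.exp (-(t*u^2)))/t) * (gg (r*u) / u^((1:ℝ)+2*α)) := by
    unfold f; ring
  have e2 : s⁻¹ * f r α s u = ((1 - Real.exp (-(s*u^2)))/s) * (gg (r*u) / u^((1:ℝ)+2*α)) := by
    unfold f; ring
  rw [e1, e2]
  exact mul_lt_mul_of_pos_right key hCB

lemma phi_strictAnti (r α : ℝ) (hr : 0 < r) (hα : 0 < α) (hα3 : α < 3) {s t : ℝ}
    (hs : 0 < s) (hst : s < t) : phiRA r α t < phiRA r α s := by
  have ht : 0 < t := hs.trans hst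
  rw [phi_eq r α hs, phi_eq r α ht]
  rw [mul_assoc, mul_assoc]
  have h2π : (0:ℝ) < 2/π := by positivity
  apply mul_lt_mul_of_pos_left _ h2π
  have hIs := integrable_f r α hα hα3 hs
  have hIt := integrable_f r α hα hα3 ht
  rw [← MeasureTheory.integral_const_mul, ← MeasureTheory.integral_const_mul, ← sub_pos,
    ← MeasureTheory.integral_sub (hIs.const_mul _) (hIt.const_mul _)]
  rw [setIntegral_pos_iff_support_of_nonneg_ae]
  · have hsub : Ioo 0 (π/r) ⊆
        Function.support (fun u => s⁻¹ * f r α s u - t⁻¹ * f r α t u) ∩ Ioi 0 := by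
      intro u hu
      refine ⟨?_, hu.1⟩
      have hru : r * u ≤ π := by
        have := (lt_div_iff₀ hr).mp hu.2
        linarith [this]
      have := diff_lt r α hr hs hst hu.1 hru
      simp only [Function.mem_support]
      intro h
      rw [sub_eq_zero] at h
      linarith [this, h.ge]
    calc (0:ENNReal) < volume (Ioo (0:ℝ) (π/r)) := by
          rw [Real.volume_Ioo]
          exact ENNReal.ofReal_pos.mpr (by simpa using div_pos Real.pi_pos hr)
      _ ≤ _ := measure_mono hsub
  · show ∀ᵐ u ∂(volume.restrict (Ioi (0:ℝ))), 0 ≤ s⁻¹ * f r α s u - t⁻¹ * f r α t u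
    rw [ae_restrict_iff' measurableSet_Ioi]
    exact ae_of_all _ fun u hu => sub_nonneg.mpr (diff_le r α hs hst hu)
  · exact (hIs.const_mul _).sub (hIt.const_mul _)

end S19

/-- identifiability, proof of (i): `φ_{r,α}(θ2) > 0` for `θ2 > 0`, and if
`e^{−κy−ηz} φ_{r,α}(θ2) = e^{−κ*y−η*z} φ_{r,α}(θ2*)` for all `y, z ∈ [b, 1−b]`, then the
parameters coincide. -/
theorem statement19
    (b α r : ℝ) (hb : 0 < b) (hb2 : b < 1 / 2) (hα : 0 < α) (hα3 : α < 3) (hr : 0 < r) :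
    (∀ θ2 : ℝ, 0 < θ2 → 0 < phiRA r α θ2) ∧
    ∀ κ η θ2 κ' η' θ2' : ℝ, 0 < θ2 → 0 < θ2' →
      (∀ y ∈ Set.Icc b (1 - b), ∀ z ∈ Set.Icc b (1 - b),
        Real.exp (-κ * y - η * z) * phiRA r α θ2 =
          Real.exp (-κ' * y - η' * z) * phiRA r α θ2') →
      κ = κ' ∧ η = η' ∧ θ2 = θ2' := by
  constructor
  · intro θ2 hθ2
    exact S19.phi_pos r α hr hα hα3 hθ2
  · intro κ η θ2 κ' η' θ2' hθ hθ' H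
    have hbb : b ∈ Set.Icc b (1-b) := ⟨le_refl b, by linarith⟩
    have hbb' : (1-b) ∈ Set.Icc b (1-b) := ⟨by linarith, le_refl _⟩
    have hp : 0 < phiRA r α θ2 := S19.phi_pos r α hr hα hα3 hθ
    have hp' : 0 < phiRA r α θ2' := S19.phi_pos r α hr hα hα3 hθ'
    have tolog : ∀ y z : ℝ, Real.exp (-κ * y - η * z) * phiRA r α θ2 =
        Real.exp (-κ' * y - η' * z) * phiRA r α θ2' →
        -κ * y - η * z + Real.log (phiRA r α θ2) = -κ' * y - η' * z + Real.log (phiRA r α θ2') := by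
      intro y z h
      have := congrArg Real.log h
      rwa [Real.log_mul (Real.exp_ne_zero _) hp.ne', Real.log_mul (Real.exp_ne_zero _) hp'.ne',
        Real.log_exp, Real.log_exp] at this
    have l1 := tolog b b (H b hbb b hbb)
    have l2 := tolog (1-b) b (H (1-b) hbb' b hbb)
    have l3 := tolog b (1-b) (H b hbb (1-b) hbb')
    have hne : (2*b - 1 : ℝ) ≠ 0 := (by linarith : (2*b - 1:ℝ) < 0).ne
    have hκ : κ = κ' := by
      have e : κ * (2*b-1) = κ' * (2*b-1) := by linear_combination l2 - l1
      exact mul_right_cancel₀ hne e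
    have hη : η = η' := by
      have e : η * (2*b-1) = η' * (2*b-1) := by linear_combination l3 - l1
      exact mul_right_cancel₀ hne e
    refine ⟨hκ, hη, ?_⟩
    have hlog : Real.log (phiRA r α θ2) = Real.log (phiRA r α θ2') := by
      rw [hκ, hη] at l1
      linarith [l1]
    have hpp : phiRA r α θ2 = phiRA r α θ2' := by
      have := congrArg Real.exp hlog
      rwa [Real.exp_log hp, Real.exp_log hp'] at this
    rcases lt_trichotomy θ2 θ2' with h | h | h
    · exfalso
      have := S19.phi_strictAnti r α hr hα hα3 hθ h
      linarith [this, hpp.ge]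
    · exact h
    · exfalso
      have := S19.phi_strictAnti r α hr hα hα3 hθ' h
      linarith [this, hpp.le]
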